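/- Let r ≥ 1 be a natural number and let ϑ_0, ϑ_1, …, ϑ_r be nonnegative real numbers with ϑ_0 + ϑ_1 + ⋯ + ϑ_r = π/2. Then the product ∏_{i=0}^{r} cos(ϑ_i) is at most (cos(π/(2(r+1))))^{r+1}, and equality holds when ϑ_i = π/(2(r+1)) for every i. -/

import Mathlib

open Real

theorem stmt_0 (r : ℕ) (hr : 1 ≤ r) (ϑ : Fin (r + 1) → ℝ)
    (hnonneg : ∀ i, 0 ≤ ϑ i) (hsum : ∑ i, ϑ i = π / 2) :
    (∏ i, Real.cos (ϑ i)) ≤ (Real.cos (π / (2 * (r + 1)))) ^ (r + 1) ∧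
    ((∀ i, ϑ i = π / (2 * (r + 1))) →
      (∏ i, Real.cos (ϑ i)) = (Real.cos (π / (2 * (r + 1)))) ^ (r + 1)) := by
  constructor
  · -- main inequality
    have hnpos : (0:ℝ) < (r:ℝ) + 1 := by positivity
    have hle : ∀ i, ϑ i ≤ π / 2 := by
      intro i
      rw [← hsum]
      exact Finset.single_le_sum (fun j _ => hnonneg j) (Finset.mem_univ i)
    have hcosnn : ∀ i, 0 ≤ Real.cos (ϑ i) := fun i =>
      Real.cos_nonneg_of_mem_Icc ⟨by linarith [hnonneg i, Real.pi_pos], hle i⟩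
    have hcard : ∑ _i : Fin (r+1), ((r:ℝ)+1)⁻¹ = 1 := by
      simp [Finset.card_univ]
      field_simp
    have hamgm : ∏ i, Real.cos (ϑ i) ^ (((r:ℝ)+1)⁻¹) ≤
        ∑ i, ((r:ℝ)+1)⁻¹ * Real.cos (ϑ i) := by
      apply Real.geom_mean_le_arith_mean_weighted
      · intro i _; positivity
      · exact hcard
      · intro i _; exact hcosnn i
    have hjensen : ∑ i, ((r:ℝ)+1)⁻¹ * Real.cos (ϑ i) ≤
        Real.cos (π / (2 * (r + 1))) := by
      have hcc := strictConcaveOn_cos_Icc.concaveOn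
      have h := hcc.le_map_sum (t := Finset.univ)
        (w := fun _ : Fin (r+1) => ((r:ℝ)+1)⁻¹)
        (p := ϑ) (fun i _ => by positivity) hcard
        (fun i _ => ⟨by linarith [hnonneg i, Real.pi_pos], hle i⟩)
      simp only [smul_eq_mul] at h
      calc ∑ i, ((r:ℝ)+1)⁻¹ * Real.cos (ϑ i)
          ≤ Real.cos (∑ i, ((r:ℝ)+1)⁻¹ * ϑ i) := h
        _ = Real.cos (π / (2 * (r + 1))) := by
            rw [← Finset.mul_sum, hsum]
            congr 1
            push_cast
            rw [eq_div_iff (by positivity)]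
            field_simp
    have hbase : (0:ℝ) ≤ ∏ i, Real.cos (ϑ i) ^ (((r:ℝ)+1)⁻¹) :=
      Finset.prod_nonneg fun i _ => Real.rpow_nonneg (hcosnn i) _
    have hpow := pow_le_pow_left₀ hbase (hamgm.trans hjensen) (r+1)
    calc ∏ i, Real.cos (ϑ i)
        = (∏ i, Real.cos (ϑ i) ^ (((r:ℝ)+1)⁻¹)) ^ (r+1) := by
          rw [← Finset.prod_pow]
          refine (Finset.prod_congr rfl fun i _ => ?_)
          have := Real.rpow_inv_natCast_pow (hcosnn i) (n := r+1) (by omega)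
          push_cast at this ⊢
          rw [this]
      _ ≤ Real.cos (π / (2 * (r + 1))) ^ (r + 1) := hpow
  · intro h
    simp only [h, Finset.prod_const, Finset.card_univ, Fintype.card_fin]
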